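/- arXiv:2304.10329 — 7 statements merged into one kernel-verified Lean document; each statement's English description precedes it below -/
import Mathlib

section
/- Let a,b,c,d ∈ ℂ³ be nonzero vectors such that the Hermitian products ⟨c,a⟩, ⟨c,b⟩, ⟨d,a⟩, ⟨d,b⟩ are all nonzero. Define the cross-ratio X(a,b,c,d) = (⟨c,a⟩⟨d,b⟩)/(⟨c,b⟩⟨d,a⟩). Then ⟨a ⊠ b, c ⊠ d⟩ = 0 if and only if X(a,b,c,d) = 1. -/
open Complex

/-- The signature (2,1) Hermitian form on ℂ³. -/
def herm (z w : Fin 3 → ℂ) : ℂ :=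
  z 0 * star (w 0) + z 1 * star (w 1) - z 2 * star (w 2)

/-- The usual cross product on ℂ³. -/
def cross (u v : Fin 3 → ℂ) : Fin 3 → ℂ :=
  ![u 1 * v 2 - u 2 * v 1, u 2 * v 0 - u 0 * v 2, u 0 * v 1 - u 1 * v 0]

/-- The box product u ⊠ v = J · conj (u ∧ v), with J = diag(1,1,−1). -/
def box (u v : Fin 3 → ℂ) : Fin 3 → ℂ :=
  ![star (cross u v 0), star (cross u v 1), - star (cross u v 2)]

/-- The Hermitian cross-ratio X(a,b,c,d). -/
noncomputable def crossRatio (a b c d : Fin 3 → ℂ) : ℂ :=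
  (herm c a * herm d b) / (herm c b * herm d a)

theorem stmt1 (a b c d : Fin 3 → ℂ)
    (ha : a ≠ 0) (hb : b ≠ 0) (hc : c ≠ 0) (hd : d ≠ 0)
    (hca : herm c a ≠ 0) (hcb : herm c b ≠ 0)
    (hda : herm d a ≠ 0) (hdb : herm d b ≠ 0) :
    herm (box a b) (box c d) = 0 ↔ crossRatio a b c d = 1 := by
  have key : herm (box a b) (box c d) = herm c b * herm d a - herm c a * herm d b := by
    simp [herm, box, cross, star_sub, star_mul]
    ring
  rw [key, sub_eq_zero, crossRatio, div_eq_one_iff_eq (mul_ne_zero hcb hda)]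
  exact eq_comm
end

section
/- Let θ, α, t ∈ ℝ. The point e^{iθ} + t·e^{−iθ/2} lies on the line {e^{iα} + s·e^{−iα/2} : s ∈ ℝ} if and only if sin((α−θ)/2)·(t − 2cos(θ/2 + α)) = 0, i.e. if and only if e^{i(α−θ)/2} ∈ ℝ or cos(θ/2 + α) = t/2. -/
open Complex

lemma expi' (r : ℝ) : Complex.exp (r * Complex.I) = (Real.cos r : ℂ) + (Real.sin r : ℂ) * Complex.I := by
  rw [Complex.exp_mul_I]; simp

lemma trig_key' (θ α t : ℝ) :
    (Real.cos θ - Real.cos α + t * Real.cos (θ/2)) * Real.sin (α/2)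
      + (Real.sin θ - Real.sin α - t * Real.sin (θ/2)) * Real.cos (α/2)
    = Real.sin ((α - θ) / 2) * (t - 2 * Real.cos (θ / 2 + α)) := by
  have h1 : Real.sin (θ + α/2) = Real.sin θ * Real.cos (α/2) + Real.cos θ * Real.sin (α/2) :=
    Real.sin_add θ (α/2)
  have h2 : Real.sin (α + α/2) = Real.sin α * Real.cos (α/2) + Real.cos α * Real.sin (α/2) :=
    Real.sin_add α (α/2)
  have h3 : Real.sin ((α - θ)/2) = Real.sin (α/2) * Real.cos (θ/2) - Real.cos (α/2) * Real.sin (θ/2) := by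
    rw [show (α - θ)/2 = α/2 - θ/2 by ring, Real.sin_sub]
  have h4 := Real.sin_sub_sin (θ + α/2) (α + α/2)
  rw [show (θ + α/2 - (α + α/2))/2 = -((α - θ)/2) by ring,
      show (θ + α/2 + (α + α/2))/2 = θ/2 + α by ring, Real.sin_neg] at h4
  linear_combination -h1 + h2 - t*h3 + h4

lemma im_key' (θ α t : ℝ) :
    ((Complex.exp (θ * Complex.I) + t * Complex.exp (-(θ / 2) * Complex.I)
        - Complex.exp (α * Complex.I)) * Complex.exp ((α/2 : ℝ) * Complex.I)).im
      = Real.sin ((α - θ) / 2) * (t - 2 * Real.cos (θ / 2 + α)) := by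
  have e1 : (-(θ / 2) : ℂ) * Complex.I = ((-(θ/2) : ℝ) : ℂ) * Complex.I := by push_cast; ring
  rw [e1, expi', expi', expi', expi', ← trig_key' θ α t]
  simp only [Complex.add_im, Complex.sub_im, Complex.mul_im, Complex.mul_re,
    Complex.ofReal_re, Complex.ofReal_im, Complex.I_re, Complex.I_im,
    Complex.add_re, Complex.sub_re, Real.cos_neg, Real.sin_neg]
  ring

theorem stmt7 (θ α t : ℝ) :
    ((∃ s : ℝ, Complex.exp (θ * Complex.I) + t * Complex.exp (-(θ / 2) * Complex.I) =
        Complex.exp (α * Complex.I) + s * Complex.exp (-(α / 2) * Complex.I)) ↔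
      Real.sin ((α - θ) / 2) * (t - 2 * Real.cos (θ / 2 + α)) = 0) ∧
    (Real.sin ((α - θ) / 2) * (t - 2 * Real.cos (θ / 2 + α)) = 0 ↔
      Real.sin ((α - θ) / 2) = 0 ∨ Real.cos (θ / 2 + α) = t / 2) := by
  have hEF : Complex.exp (-(α / 2) * Complex.I) * Complex.exp ((α/2 : ℝ) * Complex.I) = 1 := by
    rw [← Complex.exp_add]
    norm_num
  constructor
  · constructor
    · rintro ⟨s, hs⟩
      rw [← im_key' θ α t]
      have : Complex.exp (θ * Complex.I) + t * Complex.exp (-(θ / 2) * Complex.I)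
          - Complex.exp (α * Complex.I) = s * Complex.exp (-(α / 2) * Complex.I) := by
        rw [hs]; ring
      rw [this, mul_assoc, hEF, mul_one]
      simp
    · intro h
      set w := Complex.exp (θ * Complex.I) + t * Complex.exp (-(θ / 2) * Complex.I)
          - Complex.exp (α * Complex.I) with hw
      have him : (w * Complex.exp ((α/2 : ℝ) * Complex.I)).im = 0 := by
        rw [hw, im_key' θ α t, h]
      refine ⟨(w * Complex.exp ((α/2 : ℝ) * Complex.I)).re, ?_⟩
      have hwre : w * Complex.exp ((α/2 : ℝ) * Complex.I)
          = ((w * Complex.exp ((α/2 : ℝ) * Complex.I)).re : ℂ) := by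
        conv_lhs => rw [← Complex.re_add_im (w * Complex.exp ((α/2 : ℝ) * Complex.I))]
        rw [him]
        simp
      have hFE : Complex.exp ((α/2 : ℝ) * Complex.I) * Complex.exp (-(α / 2) * Complex.I) = 1 := by
        rw [mul_comm]; exact hEF
      have : ((w * Complex.exp ((α/2 : ℝ) * Complex.I)).re : ℂ)
          * Complex.exp (-(α / 2) * Complex.I) = w := by
        rw [← hwre, mul_assoc, hFE, mul_one]
      rw [this, hw]; ring
  · rw [mul_eq_zero]
    constructor
    · rintro (h | h)
      · exact Or.inl h
      · exact Or.inr (by linarith)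
    · rintro (h | h)
      · exact Or.inl h
      · exact Or.inr (by linarith)
end

section
/- Let θ, t ∈ ℝ with |t| ≤ 2 and set γ = arccos(t/2). Then the three angles α₁ = θ, α₂ = γ − θ/2, α₃ = −γ − θ/2 satisfy α₁ + α₂ + α₃ = 0, and for each k the point e^{iθ} + t·e^{−iθ/2} lies on the tangent line {e^{iα_k} + s·e^{−iα_k/2} : s ∈ ℝ}. -/
open Complex

theorem key_lemma_stmt8 (γ θ : ℝ) :
    Complex.exp (θ * I) + (2 * Real.cos γ : ℝ) * Complex.exp (-(θ / 2) * I) =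
      Complex.exp ((γ - θ / 2) * I) +
        (2 * Real.cos (γ / 2 + 3 * θ / 4) : ℝ) * Complex.exp (-((γ - θ / 2) / 2) * I) := by
  have h1 : ((2 * Real.cos γ : ℝ) : ℂ) = Complex.exp (γ * I) + Complex.exp (-γ * I) := by
    push_cast [Complex.ofReal_cos]
    rw [Complex.two_cos]
  have h2 : ((2 * Real.cos (γ / 2 + 3 * θ / 4) : ℝ) : ℂ) =
      Complex.exp ((γ / 2 + 3 * θ / 4 : ℝ) * I) + Complex.exp (-(γ / 2 + 3 * θ / 4 : ℝ) * I) := by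
    push_cast [Complex.ofReal_cos]
    rw [Complex.two_cos]
  rw [h1, h2, add_mul, add_mul, ← Complex.exp_add, ← Complex.exp_add, ← Complex.exp_add,
    ← Complex.exp_add]
  push_cast
  ring_nf

theorem stmt8 (θ t : ℝ) (ht : |t| ≤ 2) :
    let γ := Real.arccos (t / 2)
    let α₁ := θ
    let α₂ := γ - θ / 2
    let α₃ := -γ - θ / 2
    α₁ + α₂ + α₃ = 0 ∧
    (∀ α ∈ ({α₁, α₂, α₃} : Set ℝ),
      ∃ s : ℝ, Complex.exp (θ * Complex.I) + t * Complex.exp (-(θ / 2) * Complex.I) =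
        Complex.exp (α * Complex.I) + s * Complex.exp (-(α / 2) * Complex.I)) := by
  intro γ α₁ α₂ α₃
  have hα₁ : α₁ = θ := rfl
  have hα₂ : α₂ = γ - θ / 2 := rfl
  have hα₃ : α₃ = -γ - θ / 2 := rfl
  obtain ⟨ht1, ht2⟩ := abs_le.1 ht
  have hcos : Real.cos γ = t / 2 := Real.cos_arccos (by linarith) (by linarith)
  clear_value α₁ α₂ α₃ γ
  have htt : (t : ℂ) = ((2 * Real.cos γ : ℝ) : ℂ) := by
    rw [hcos]; push_cast; ring
  refine ⟨by rw [hα₁, hα₂, hα₃]; ring, ?_⟩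
  intro α hα
  rcases hα with h | h | h
  · exact ⟨t, by rw [h, hα₁]⟩
  · refine ⟨2 * Real.cos (γ / 2 + 3 * θ / 4), ?_⟩
    rw [h, hα₂, htt]
    have := key_lemma_stmt8 γ θ
    convert this using 3 <;> (try (congr 1)) <;> push_cast <;> ring
  · refine ⟨2 * Real.cos (-γ / 2 + 3 * θ / 4), ?_⟩
    rw [h, hα₃, htt]
    have := key_lemma_stmt8 (-γ) θ
    rw [Real.cos_neg] at this
    convert this using 3 <;> (try (congr 1)) <;> push_cast <;> ring
end

section
/- Let θ₁, θ₂ ∈ ℝ, φ ∈ ℝ, and consider the complex number T = (2e^{i(θ₂−θ₁)/3} + e^{−2i(θ₂−θ₁)/3}) − 4·sin²(φ)·sin(θ₁/2)·sin(θ₂/2)·e^{−i(θ₂−θ₁)/6}. Then T lies on the tangent line to the deltoid at the point of parameter (θ₂−θ₁)/3, i.e. T ∈ {2e^{iβ} + e^{−2iβ} + t·e^{−iβ/2} : t ∈ ℝ} with β = (θ₂−θ₁)/3. -/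
open Complex

theorem stmt9 (θ₁ θ₂ φ : ℝ) :
    let β : ℝ := (θ₂ - θ₁) / 3
    let T : ℂ := (2 * Complex.exp (β * Complex.I) + Complex.exp (-2 * β * Complex.I)) -
      4 * Real.sin φ ^ 2 * Real.sin (θ₁ / 2) * Real.sin (θ₂ / 2) *
        Complex.exp (-((θ₂ - θ₁) / 6) * Complex.I)
    T ∈ {z : ℂ | ∃ t : ℝ, z = 2 * Complex.exp (β * Complex.I) +
        Complex.exp (-2 * β * Complex.I) + t * Complex.exp (-(β / 2) * Complex.I)} := by
  intro β T
  refine ⟨-(4 * Real.sin φ ^ 2 * Real.sin (θ₁ / 2) * Real.sin (θ₂ / 2)), ?_⟩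
  have e : Complex.exp (-((θ₂ - θ₁) / 6 : ℂ) * Complex.I)
      = Complex.exp (-((β : ℝ) / 2 : ℂ) * Complex.I) := by
    congr 1
    push_cast [β]
    ring
  show (2 * Complex.exp (β * Complex.I) + Complex.exp (-2 * β * Complex.I)) -
      4 * Real.sin φ ^ 2 * Real.sin (θ₁ / 2) * Real.sin (θ₂ / 2) *
        Complex.exp (-((θ₂ - θ₁) / 6) * Complex.I) = _
  rw [e]
  push_cast
  ring
end

section
/- Let H be the Hermitian 3×3 matrix with diagonal entries 1 and H_{12}=r₃u, H_{23}=r₁u, H_{31}=r₂u (and conjugate-symmetric entries), where r₁,r₂,r₃ > 0 and u = e^{iα/3}. Then det H = 1 − r₁² − r₂² − r₃² + 2r₁r₂r₃cos(α). In particular det H < 0 if and only if cos(α) < (r₁² + r₂² + r₃² − 1)/(2r₁r₂r₃). -/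
open Complex Matrix

theorem stmt11 (r₁ r₂ r₃ α : ℝ) (hr₁ : 0 < r₁) (hr₂ : 0 < r₂) (hr₃ : 0 < r₃) :
    let u : ℂ := Complex.exp ((α / 3 : ℝ) * Complex.I)
    let H : Matrix (Fin 3) (Fin 3) ℂ :=
      !![1, (r₃ : ℂ) * u, (r₂ : ℂ) * u⁻¹;
         (r₃ : ℂ) * u⁻¹, 1, (r₁ : ℂ) * u;
         (r₂ : ℂ) * u, (r₁ : ℂ) * u⁻¹, 1]
    H.det = ((1 - r₁ ^ 2 - r₂ ^ 2 - r₃ ^ 2 + 2 * r₁ * r₂ * r₃ * Real.cos α : ℝ) : ℂ) ∧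
    (H.det.re < 0 ↔ Real.cos α < (r₁ ^ 2 + r₂ ^ 2 + r₃ ^ 2 - 1) / (2 * r₁ * r₂ * r₃)) := by
  intro u H
  have hu : u ≠ 0 := Complex.exp_ne_zero _
  have h3 : u ^ 3 = Complex.exp ((α : ℝ) * Complex.I) := by
    show Complex.exp ((α / 3 : ℝ) * Complex.I) ^ 3 = _
    rw [← Complex.exp_nat_mul]
    congr 1
    push_cast
    ring
  have h3' : u⁻¹ ^ 3 = Complex.exp (-((α : ℝ) * Complex.I)) := by
    rw [inv_pow, h3, ← Complex.exp_neg]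
  have hcube : u ^ 3 + u⁻¹ ^ 3 = 2 * (Real.cos α : ℂ) := by
    rw [h3, h3',
      show -((α:ℝ) * Complex.I) = ((-α : ℝ) : ℂ) * Complex.I by push_cast; ring,
      Complex.exp_mul_I, Complex.exp_mul_I]
    push_cast [Complex.cos_neg, Complex.sin_neg]
    ring
  have hdet : H.det = ((1 - r₁ ^ 2 - r₂ ^ 2 - r₃ ^ 2 + 2 * r₁ * r₂ * r₃ * Real.cos α : ℝ) : ℂ) := by
    have key : H.det = 1 - r₁ ^ 2 - r₂ ^ 2 - r₃ ^ 2 + (r₁ * r₂ * r₃ : ℝ) * (u ^ 3 + u⁻¹ ^ 3) := by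
      simp [H, Matrix.det_fin_three]
      have hv : u * u⁻¹ = 1 := mul_inv_cancel₀ hu
      linear_combination (-((r₁:ℂ) ^ 2 + (r₂:ℂ) ^ 2 + (r₃:ℂ) ^ 2)) * hv
    rw [key, hcube]
    push_cast
    ring
  refine ⟨hdet, ?_⟩
  rw [hdet, Complex.ofReal_re, lt_div_iff₀ (by positivity : (0:ℝ) < 2 * r₁ * r₂ * r₃)]
  constructor <;> intro h <;> nlinarith
end

section
/- Let A, B ∈ SU(2,1) and let P_A, P_B, P_C ∈ ℂ³ be eigenvectors: A·P_A = λ_A·P_A, B·P_B = λ_B·P_B, (AB)·P_C = λ_{AB}·P_C, with all pairwise Hermitian products among P_A, P_B, P_C, and A⁻¹P_C nonzero. Set P_{BA} := A⁻¹·P_C. Then the cross-ratio X(P_A, P_B, P_C, P_{BA}) = (⟨P_C,P_A⟩⟨P_{BA},P_B⟩)/(⟨P_C,P_B⟩⟨P_{BA},P_A⟩) equals λ_A·λ_B/λ_{AB}. -/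
open Complex Matrix

/-- The matrix of the Hermitian form: J = diag(1,1,−1). -/
def Jmat : Matrix (Fin 3) (Fin 3) ℂ := !![1, 0, 0; 0, 1, 0; 0, 0, -1]

lemma herm_invariant (A : Matrix (Fin 3) (Fin 3) ℂ) (hA : Aᴴ * Jmat * A = Jmat)
    (z w : Fin 3 → ℂ) : herm (A.mulVec z) (A.mulVec w) = herm z w := by
  have e : ∀ i j : Fin 3, (Aᴴ * Jmat * A) i j = Jmat i j := fun i j => by rw [hA]
  have e00 := e 0 0; have e01 := e 0 1; have e02 := e 0 2
  have e10 := e 1 0; have e11 := e 1 1; have e12 := e 1 2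
  have e20 := e 2 0; have e21 := e 2 1; have e22 := e 2 2
  simp [Jmat, Matrix.mul_apply, Matrix.conjTranspose_apply,
    Fin.sum_univ_three, Matrix.vecHead, Matrix.vecTail] at e00 e01 e02 e10 e11 e12 e20 e21 e22
  simp [herm, Matrix.mulVec, dotProduct, Fin.sum_univ_three, star_add, star_mul', Complex.star_def]
  linear_combination
    z 0 * (starRingEnd ℂ) (w 0) * e00 + z 1 * (starRingEnd ℂ) (w 0) * e01 + z 2 * (starRingEnd ℂ) (w 0) * e02 +
    z 0 * (starRingEnd ℂ) (w 1) * e10 + z 1 * (starRingEnd ℂ) (w 1) * e11 + z 2 * (starRingEnd ℂ) (w 1) * e12 +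
    z 0 * (starRingEnd ℂ) (w 2) * e20 + z 1 * (starRingEnd ℂ) (w 2) * e21 + z 2 * (starRingEnd ℂ) (w 2) * e22

lemma herm_smul_left (c : ℂ) (z w : Fin 3 → ℂ) : herm (c • z) w = c * herm z w := by
  simp [herm]; ring

lemma herm_smul_right (c : ℂ) (z w : Fin 3 → ℂ) : herm z (c • w) = star c * herm z w := by
  simp [herm]; ring

theorem stmt12 (A B : Matrix (Fin 3) (Fin 3) ℂ)
    (hA : Aᴴ * Jmat * A = Jmat) (hdA : A.det = 1)
    (hB : Bᴴ * Jmat * B = Jmat) (hdB : B.det = 1)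
    (PA PB PC PBA : Fin 3 → ℂ) (lA lB lAB : ℂ)
    (hlA : ‖lA‖ = 1) (hlB : ‖lB‖ = 1) (hlAB : ‖lAB‖ = 1)
    (hPA : A.mulVec PA = lA • PA) (hPB : B.mulVec PB = lB • PB)
    (hPC : (A * B).mulVec PC = lAB • PC)
    (hPBA : A.mulVec PBA = PC)
    (h1 : herm PC PA ≠ 0) (h2 : herm PC PB ≠ 0)
    (h3 : herm PBA PA ≠ 0) (h4 : herm PBA PB ≠ 0)
    (h5 : herm PA PB ≠ 0) :
    (herm PC PA * herm PBA PB) / (herm PC PB * herm PBA PA) = lA * lB / lAB := by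
  -- unit modulus facts
  have unit : ∀ l : ℂ, ‖l‖ = 1 → star l * l = 1 := by
    intro l hl
    have hn : Complex.normSq l = 1 := by
      rw [Complex.normSq_eq_norm_sq, hl]; norm_num
    calc star l * l = l * (starRingEnd ℂ) l := by rw [mul_comm]; rfl
    _ = (Complex.normSq l : ℂ) := Complex.mul_conj l
    _ = 1 := by rw [hn]; norm_num
  have uA := unit lA hlA
  have uB := unit lB hlB
  have uAB := unit lAB hlAB
  have hlABne : lAB ≠ 0 := by
    intro h; rw [h] at hlAB; simp at hlAB
  -- A is invertible
  have hAunit : IsUnit A.det := by rw [hdA]; exact isUnit_one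
  -- B *ᵥ PC = lAB • PBA
  have hBPC : B.mulVec PC = lAB • PBA := by
    have h' : A.mulVec (B.mulVec PC) = A.mulVec (lAB • PBA) := by
      rw [Matrix.mulVec_mulVec, hPC, Matrix.mulVec_smul, hPBA]
    have hinj : Function.Injective A.mulVec := Matrix.mulVec_injective_iff_isUnit.2 ((Matrix.isUnit_iff_isUnit_det A).2 hAunit)
    exact hinj h'
  -- E1 : herm PC PA = lA * herm PBA PA
  have E1 : herm PC PA = lA * herm PBA PA := by
    have := herm_invariant A hA PBA PA
    rw [hPBA, hPA, herm_smul_right] at this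
    calc herm PC PA = lA * (star lA * herm PC PA) := by rw [← mul_assoc, mul_comm lA, uA, one_mul]
    _ = lA * herm PBA PA := by rw [this]
  -- E2 : lB * herm PC PB = lAB * herm PBA PB
  have E2 : lB * herm PC PB = lAB * herm PBA PB := by
    have := herm_invariant B hB PC PB
    rw [hBPC, hPB, herm_smul_left, herm_smul_right] at this
    calc lB * herm PC PB = lB * (lAB * (star lB * herm PBA PB)) := by rw [this]
    _ = (star lB * lB) * (lAB * herm PBA PB) := by ring
    _ = lAB * herm PBA PB := by rw [uB, one_mul]
  field_simp
  linear_combination herm PBA PB * lAB * E1 - lA * herm PBA PA * E2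
end

section
/- Let A₁, B₁, A₂, B₂ ∈ SU(2) satisfy Tr(A₁) = Tr(A₂), Tr(B₁) = Tr(B₂), and Tr(A₁B₁) = Tr(A₂B₂), and assume the pair (A₁,B₁) is irreducible (A₁ and B₁ have no common eigenvector). Then there exists P ∈ SU(2) with A₂ = P A₁ P⁻¹ and B₂ = P B₁ P⁻¹. -/
open Complex Matrix ComplexConjugate

lemma su2_entries (M : Matrix (Fin 2) (Fin 2) ℂ) (hM : M ∈ Matrix.unitaryGroup (Fin 2) ℂ)
    (hd : M.det = 1) :
    M 1 1 = conj (M 0 0) ∧ M 1 0 = -conj (M 0 1) ∧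
      M 0 0 * conj (M 0 0) + M 0 1 * conj (M 0 1) = 1 := by
  have h1 : M * star M = 1 := (Matrix.mem_unitaryGroup_iff).mp hM
  rw [Matrix.det_fin_two] at hd
  have e00 := congrFun (congrFun h1 0) 0
  have e01 := congrFun (congrFun h1 0) 1
  simp [Matrix.mul_apply, Fin.sum_univ_two, Matrix.one_apply, Matrix.conjTranspose_apply] at e00 e01
  set x := M 0 0; set y := M 0 1; set z := M 1 0; set w := M 1 1
  have e01' : conj x * z + conj y * w = 0 := by
    have := congrArg conj e01
    simpa using this
  have hw : w = conj x := by
    linear_combination (conj x) * hd + y * e01' - w * e00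
  rw [hw] at hd e01'
  have hy : y * (z + conj y) = 0 := by linear_combination e00 - hd
  have hx : conj x * (z + conj y) = 0 := by linear_combination e01'
  have hz : z = - conj y := by
    by_contra hne
    have hne' : z + conj y ≠ 0 := fun h => hne (by linear_combination h)
    have hy0 : y = 0 := by
      rcases mul_eq_zero.mp hy with h | h
      · exact h
      · exact absurd h hne'
    have hx0 : conj x = 0 := by
      rcases mul_eq_zero.mp hx with h | h
      · exact h
      · exact absurd h hne'
    rw [hy0, hx0] at e00
    simp at e00
  exact ⟨hw, hz, e00⟩

lemma su2_mk (x y : ℂ) (h : x * conj x + y * conj y = 1) :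
    !![x, y; -conj y, conj x] ∈ Matrix.unitaryGroup (Fin 2) ℂ ∧
      (!![x, y; -conj y, conj x] : Matrix (Fin 2) (Fin 2) ℂ).det = 1 := by
  constructor
  · rw [Matrix.mem_unitaryGroup_iff]
    ext i j
    fin_cases i <;> fin_cases j <;>
      simp [Matrix.mul_apply, Fin.sum_univ_two, Matrix.one_apply, Matrix.conjTranspose_apply] <;>
      first | ring1 | linear_combination h | linear_combination -h
  · rw [Matrix.det_fin_two]
    simp
    first | ring1 | linear_combination h | linear_combination -h

lemma unit_sqrt (z : ℂ) (hz : z * conj z = 1) : ∃ u : ℂ, u * conj u = 1 ∧ u ^ 2 = z := by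
  by_cases h : z = -1
  · refine ⟨I, ?_, by rw [h, I_sq]⟩
    rw [Complex.conj_I]
    simp [Complex.I_mul_I]
  · set w : ℂ := 1 + z with hwdef
    have hw : w ≠ 0 := fun hc => h (by linear_combination hc)
    have habs : ((‖w‖ : ℝ) : ℂ) ≠ 0 := by
      simpa using (norm_ne_zero_iff).mpr hw
    have key : ((‖w‖ : ℝ) : ℂ) ^ 2 = w * conj w := by
      rw [Complex.mul_conj]; norm_cast; exact Complex.sq_norm w
    have hcw : conj w = 1 + conj z := by simp [hwdef]
    have hwz : w = z * conj w := by rw [hcw]; linear_combination -hz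
    refine ⟨w / ((‖w‖ : ℝ) : ℂ), ?_, ?_⟩
    · rw [map_div₀, Complex.conj_ofReal, div_mul_div_comm, ← key]
      field_simp
    · rw [div_pow, key]
      rw [div_eq_iff (mul_ne_zero hw ((map_ne_zero (starRingEnd ℂ)).mpr hw))]
      linear_combination w * hwz
lemma diag_phase (A : Matrix (Fin 2) (Fin 2) ℂ) (hA : A ∈ Matrix.unitaryGroup (Fin 2) ℂ)
    (hdA : A.det = 1) :
    ∃ Q : Matrix (Fin 2) (Fin 2) ℂ, Q ∈ Matrix.unitaryGroup (Fin 2) ℂ ∧ Q.det = 1 ∧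
      ∃ a : ℂ, a * conj a = 1 ∧ 0 ≤ a.im ∧ A * Q = Q * !![a, 0; 0, conj a] := by
  obtain ⟨h11, h10, hnorm⟩ := su2_entries A hA hdA
  set x := A 0 0 with hx
  set y := A 0 1 with hy
  by_cases hy0 : y = 0
  · -- A is diagonal
    have hAeq : A = !![x, 0; 0, conj x] := by
      ext i j
      fin_cases i <;> fin_cases j <;> simp [h11, h10, ← hx, ← hy, hy0]
    have hxx : x * conj x = 1 := by rw [hy0] at hnorm; simpa using hnorm
    by_cases him : 0 ≤ x.im
    · refine ⟨1, Submonoid.one_mem _, Matrix.det_one, x, hxx, him, ?_⟩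
      rw [mul_one, one_mul, hAeq]
    · refine ⟨!![0, -1; 1, 0], ?_, ?_, conj x, ?_, ?_, ?_⟩
      · have h := (su2_mk 0 (-1) (by simp)).1
        simpa using h
      · have h := (su2_mk 0 (-1) (by simp)).2
        simpa using h
      · rw [Complex.conj_conj]; linear_combination hxx
      · simp only [Complex.conj_im]
        simp at him
        linarith
      · rw [hAeq]
        ext i j
        fin_cases i <;> fin_cases j <;>
          simp [Matrix.mul_apply, Fin.sum_univ_two, Complex.conj_conj]
  · -- A not diagonal: genuine eigenvector computation
    have hnq : Complex.normSq x + Complex.normSq y = 1 := by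
      have := hnorm
      rw [Complex.mul_conj, Complex.mul_conj] at this
      exact_mod_cast this
    obtain ⟨a, haa, him, hsum, hquad⟩ :
        ∃ a : ℂ, a * conj a = 1 ∧ 0 ≤ a.im ∧ a + conj a = x + conj x ∧
          a * a - (x + conj x) * a + 1 = 0 := by
      set r := x.re with hr
      have hr2 : 1 - r ^ 2 ≥ 0 := by
        have h1 : Complex.normSq x = x.re ^ 2 + x.im ^ 2 := by
          rw [Complex.normSq_apply]; ring
        nlinarith [Complex.normSq_nonneg y, sq_nonneg x.im]
      set s := Real.sqrt (1 - r ^ 2) with hs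
      have hs0 : 0 ≤ s := Real.sqrt_nonneg _
      have hs2 : (s : ℂ) ^ 2 = 1 - (r : ℂ) ^ 2 := by
        have : s ^ 2 = 1 - r ^ 2 := Real.sq_sqrt hr2
        exact_mod_cast this
      have hI : (I : ℂ) ^ 2 = -1 := I_sq
      have hxr : x + conj x = 2 * (r : ℂ) := by
        rw [Complex.add_conj]; norm_cast
      refine ⟨(r : ℂ) + (s : ℂ) * I, ?_, ?_, ?_, ?_⟩
      · have hca : conj ((r : ℂ) + (s : ℂ) * I) = (r : ℂ) - (s : ℂ) * I := by
          simp [Complex.conj_ofReal, Complex.conj_I]; ring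
        rw [hca]; linear_combination (-(s:ℂ)^2) * hI + hs2
      · simp [hs0]
      · have hca : conj ((r : ℂ) + (s : ℂ) * I) = (r : ℂ) - (s : ℂ) * I := by
          simp [Complex.conj_ofReal, Complex.conj_I]; ring
        rw [hca, hxr]; ring
      · rw [hxr]; linear_combination (s:ℂ)^2 * hI - hs2
    -- the normalization constant
    obtain ⟨n, hnC, hcn, hn2C⟩ : ∃ n : ℂ, n ≠ 0 ∧ conj n = n ∧
        n ^ 2 = y * conj y + (a - x) * (conj a - conj x) := by
      refine ⟨(Real.sqrt (Complex.normSq y + Complex.normSq (a - x)) : ℝ), ?_,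
        Complex.conj_ofReal _, ?_⟩
      · have : 0 < Real.sqrt (Complex.normSq y + Complex.normSq (a - x)) := by
          apply Real.sqrt_pos.mpr
          have := Complex.normSq_pos.mpr hy0
          nlinarith [Complex.normSq_nonneg (a - x)]
        exact_mod_cast this.ne'
      · rw [show conj a - conj x = conj (a - x) by rw [map_sub],
          Complex.mul_conj, Complex.mul_conj]
        norm_cast
        exact Real.sq_sqrt (add_nonneg (Complex.normSq_nonneg _) (Complex.normSq_nonneg _))
    set p : ℂ := y / n with hp
    set q : ℂ := (a - x) / n with hq
    have hcp : conj p = conj y / n := by rw [hp, map_div₀, hcn]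
    have hcq : conj q = (conj a - conj x) / n := by rw [hq, map_div₀, map_sub, hcn]
    have hcond : p * conj p + (-conj q) * conj (-conj q) = 1 := by
      simp only [map_neg, Complex.conj_conj, neg_mul_neg]
      rw [hcp, hcq, hp, hq]
      field_simp
      linear_combination -hn2C
    obtain ⟨hQmem, hQdet⟩ := su2_mk p (-conj q) hcond
    have hQform : (!![p, -conj q; -conj (-conj q), conj p] : Matrix (Fin 2) (Fin 2) ℂ)
        = !![p, -conj q; q, conj p] := by simp
    rw [hQform] at hQmem hQdet
    refine ⟨!![p, -conj q; q, conj p], hQmem, hQdet, a, haa, him, ?_⟩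
    have I1 : x * p + y * q = a * p := by
      rw [hp, hq]; field_simp; ring
    have I2 : -conj y * p + conj x * q = a * q := by
      rw [hp, hq]
      field_simp
      linear_combination -hquad - hnorm
    have I1' : conj x * conj p + conj y * conj q = conj a * conj p := by
      have := congrArg conj I1
      simpa using this
    have I2' : -y * conj p + x * conj q = conj a * conj q := by
      have := congrArg conj I2
      simpa using this
    ext i j
    fin_cases i <;> fin_cases j <;>
      simp [Matrix.mul_apply, Fin.sum_univ_two, h10, h11, ← hx, ← hy]
    · linear_combination I1
    · linear_combination -I2'
    · linear_combination I2
    · linear_combination I1'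

lemma eigvec (M : Matrix (Fin 2) (Fin 2) ℂ) (hM : M ∈ Matrix.unitaryGroup (Fin 2) ℂ)
    (hd : M.det = 1) : ∃ (v : Fin 2 → ℂ) (μ : ℂ), v ≠ 0 ∧ M.mulVec v = μ • v := by
  obtain ⟨Q, hQm, hQd, a, -, -, hMQ⟩ := diag_phase M hM hd
  have hQu : IsUnit Q.det := by rw [hQd]; exact isUnit_one
  have hDe : (!![a, 0; 0, conj a] : Matrix (Fin 2) (Fin 2) ℂ).mulVec ![1, 0] = a • ![1, 0] := by
    funext i
    fin_cases i <;> simp [Matrix.mulVec, dotProduct, Fin.sum_univ_two]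
  refine ⟨Q.mulVec ![1, 0], a, ?_, ?_⟩
  · intro h0
    have h1 : (Q⁻¹ * Q).mulVec ![1, 0] = (0 : Fin 2 → ℂ) := by
      rw [← Matrix.mulVec_mulVec, h0, Matrix.mulVec_zero]
    rw [Matrix.nonsing_inv_mul _ hQu, Matrix.one_mulVec] at h1
    have := congrFun h1 0
    simp at this
  · rw [Matrix.mulVec_mulVec, hMQ, ← Matrix.mulVec_mulVec, hDe, Matrix.mulVec_smul]

lemma rot_phase (A B Q : Matrix (Fin 2) (Fin 2) ℂ) (a b c : ℂ)
    (hQm : Q ∈ Matrix.unitaryGroup (Fin 2) ℂ) (hQd : Q.det = 1)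
    (hAQ : A * Q = Q * !![a, 0; 0, conj a])
    (hBQ : B * Q = Q * !![b, c; -conj c, conj b]) (hc : c ≠ 0) :
    ∃ Qf : Matrix (Fin 2) (Fin 2) ℂ, Qf ∈ Matrix.unitaryGroup (Fin 2) ℂ ∧ Qf.det = 1 ∧
      A * Qf = Qf * !![a, 0; 0, conj a] ∧
      B * Qf = Qf * !![b, ((‖c‖ : ℝ) : ℂ);
        -((‖c‖ : ℝ) : ℂ), conj b] := by
  have habs : ((‖c‖ : ℝ) : ℂ) ≠ 0 := by
    simpa using (norm_ne_zero_iff).mpr hc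
  have hz : (c / ((‖c‖ : ℝ) : ℂ)) * conj (c / ((‖c‖ : ℝ) : ℂ)) = 1 := by
    rw [map_div₀, Complex.conj_ofReal, div_mul_div_comm]
    rw [Complex.mul_conj]
    rw [div_eq_one_iff_eq (mul_ne_zero habs habs)]
    norm_cast
    rw [← Complex.sq_norm c]; ring
  obtain ⟨u, huu, hu2⟩ := unit_sqrt _ hz
  have hu2' : u ^ 2 * ((‖c‖ : ℝ) : ℂ) = c := by
    rw [hu2]; field_simp
  have key1 : c * conj u = u * ((‖c‖ : ℝ) : ℂ) := by
    linear_combination (-(conj u)) * hu2' + (((‖c‖ : ℝ) : ℂ) * u) * huu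
  have key2 : conj c * u = conj u * ((‖c‖ : ℝ) : ℂ) := by
    have := congrArg conj key1
    simpa [Complex.conj_ofReal, mul_comm] using this
  have hcond : u * conj u + (0 : ℂ) * conj 0 = 1 := by simpa using huu
  obtain ⟨hRm, hRd⟩ := su2_mk u 0 hcond
  have hRform : (!![u, 0; -conj 0, conj u] : Matrix (Fin 2) (Fin 2) ℂ)
      = !![u, 0; 0, conj u] := by simp
  rw [hRform] at hRm hRd
  set R : Matrix (Fin 2) (Fin 2) ℂ := !![u, 0; 0, conj u] with hR
  have hDR : !![a, 0; 0, conj a] * R = R * !![a, 0; 0, conj a] := by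
    ext i j
    fin_cases i <;> fin_cases j <;>
      simp [hR, Matrix.mul_apply, Fin.sum_univ_two] <;> ring
  have hBR : !![b, c; -conj c, conj b] * R
      = R * !![b, ((‖c‖ : ℝ) : ℂ); -((‖c‖ : ℝ) : ℂ), conj b] := by
    ext i j
    fin_cases i <;> fin_cases j <;>
      simp [hR, Matrix.mul_apply, Fin.sum_univ_two] <;>
      first | ring1 | linear_combination key1 | linear_combination -key1 |
        linear_combination key2 | linear_combination -key2
  refine ⟨Q * R, mul_mem hQm hRm, by rw [Matrix.det_mul, hQd, hRd, one_mul], ?_, ?_⟩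
  · rw [← mul_assoc, hAQ, mul_assoc, hDR, ← mul_assoc]
  · rw [← mul_assoc, hBQ, mul_assoc, hBR, ← mul_assoc]

lemma unit_pt_eq (a₁ a₂ : ℂ) (h1 : a₁ * conj a₁ = 1) (h2 : a₂ * conj a₂ = 1)
    (hi1 : 0 ≤ a₁.im) (hi2 : 0 ≤ a₂.im) (hsum : a₁ + conj a₁ = a₂ + conj a₂) : a₁ = a₂ := by
  have hre : a₁.re = a₂.re := by
    have := congrArg Complex.re hsum
    simp [Complex.add_re, Complex.conj_re] at this
    linarith
  have hn1 : a₁.re ^ 2 + a₁.im ^ 2 = 1 := by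
    rw [Complex.mul_conj] at h1
    have : Complex.normSq a₁ = 1 := by exact_mod_cast h1
    rw [Complex.normSq_apply] at this
    nlinarith
  have hn2 : a₂.re ^ 2 + a₂.im ^ 2 = 1 := by
    rw [Complex.mul_conj] at h2
    have : Complex.normSq a₂ = 1 := by exact_mod_cast h2
    rw [Complex.normSq_apply] at this
    nlinarith
  rw [hre] at hn1
  have h3 : a₁.im ^ 2 = a₂.im ^ 2 := by linarith
  have him : a₁.im = a₂.im := by
    rcases lt_trichotomy a₁.im a₂.im with h | h | h
    · exfalso; nlinarith
    · exact h
    · exfalso; nlinarith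
  exact Complex.ext hre him

lemma second_eq (a b₁ b₂ : ℂ) (ha : a.im ≠ 0) (h1 : b₁ + conj b₁ = b₂ + conj b₂)
    (h2 : a * b₁ + conj a * conj b₁ = a * b₂ + conj a * conj b₂) : b₁ = b₂ := by
  have hre : b₁.re = b₂.re := by
    have := congrArg Complex.re h1
    simp [Complex.add_re, Complex.conj_re] at this
    linarith
  simp only [← _root_.map_mul] at h2
  have h2' := congrArg Complex.re h2
  simp [Complex.add_re, Complex.conj_re] at h2'
  have him : b₁.im = b₂.im := by
    have h3 : a.im * b₁.im = a.im * b₂.im := by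
      rw [hre] at h2'
      linarith
    exact mul_left_cancel₀ ha h3
  exact Complex.ext hre him

lemma trace_conj (M N Q : Matrix (Fin 2) (Fin 2) ℂ) (hQl : star Q * Q = 1)
    (hQr : Q * star Q = 1) (hMQ : M * Q = Q * N) : M.trace = N.trace := by
  have hM : M = Q * N * star Q := by
    have h := congrArg (· * star Q) hMQ
    simp only [mul_assoc] at h
    rw [hQr, mul_one] at h
    rw [h, mul_assoc]
  rw [hM, Matrix.trace_mul_comm, ← mul_assoc, hQl, one_mul]

lemma eq_form (M N Q : Matrix (Fin 2) (Fin 2) ℂ)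
    (hQr : Q * star Q = 1) (hMQ : M * Q = Q * N) : M = Q * N * star Q := by
  have h := congrArg (· * star Q) hMQ
  simp only [mul_assoc] at h
  rw [hQr, mul_one] at h
  rw [h, mul_assoc]

lemma assemble (M₁ M₂ N Q₁ Q₂ : Matrix (Fin 2) (Fin 2) ℂ)
    (h₁l : star Q₁ * Q₁ = 1) (h₁r : Q₁ * star Q₁ = 1) (h₂r : Q₂ * star Q₂ = 1)
    (hM₁ : M₁ * Q₁ = Q₁ * N) (hM₂ : M₂ * Q₂ = Q₂ * N) :
    M₂ = (Q₂ * star Q₁) * M₁ * (Q₁ * star Q₂) := by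
  rw [eq_form M₁ N Q₁ h₁r hM₁, eq_form M₂ N Q₂ h₂r hM₂]
  calc Q₂ * N * star Q₂ = Q₂ * 1 * N * 1 * star Q₂ := by rw [mul_one, mul_one]
  _ = Q₂ * (star Q₁ * Q₁) * N * (star Q₁ * Q₁) * star Q₂ := by rw [h₁l]
  _ = Q₂ * star Q₁ * (Q₁ * N * star Q₁) * (Q₁ * star Q₂) := by
      simp only [Matrix.mul_assoc]

theorem stmt14 (A₁ B₁ A₂ B₂ : Matrix (Fin 2) (Fin 2) ℂ)
    (hA₁ : A₁ ∈ Matrix.unitaryGroup (Fin 2) ℂ) (hdA₁ : A₁.det = 1)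
    (hB₁ : B₁ ∈ Matrix.unitaryGroup (Fin 2) ℂ) (hdB₁ : B₁.det = 1)
    (hA₂ : A₂ ∈ Matrix.unitaryGroup (Fin 2) ℂ) (hdA₂ : A₂.det = 1)
    (hB₂ : B₂ ∈ Matrix.unitaryGroup (Fin 2) ℂ) (hdB₂ : B₂.det = 1)
    (htA : A₁.trace = A₂.trace) (htB : B₁.trace = B₂.trace)
    (htAB : (A₁ * B₁).trace = (A₂ * B₂).trace)
    (hirr : ¬ ∃ (v : Fin 2 → ℂ) (μ ν : ℂ), v ≠ 0 ∧
      A₁.mulVec v = μ • v ∧ B₁.mulVec v = ν • v) :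
    ∃ P : Matrix (Fin 2) (Fin 2) ℂ, P ∈ Matrix.unitaryGroup (Fin 2) ℂ ∧ P.det = 1 ∧
      A₂ = P * A₁ * P⁻¹ ∧ B₂ = P * B₁ * P⁻¹ := by
  obtain ⟨Q₁, hQ₁m, hQ₁d, a₁, haa₁, him₁, hAQ₁⟩ := diag_phase A₁ hA₁ hdA₁
  obtain ⟨Q₂, hQ₂m, hQ₂d, a₂, haa₂, him₂, hAQ₂⟩ := diag_phase A₂ hA₂ hdA₂
  have hQ₁l : star Q₁ * Q₁ = 1 := mem_unitaryGroup_iff'.mp hQ₁m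
  have hQ₁r : Q₁ * star Q₁ = 1 := mem_unitaryGroup_iff.mp hQ₁m
  have hQ₂l : star Q₂ * Q₂ = 1 := mem_unitaryGroup_iff'.mp hQ₂m
  have hQ₂r : Q₂ * star Q₂ = 1 := mem_unitaryGroup_iff.mp hQ₂m
  -- conjugated B matrices
  have getB : ∀ B Q : Matrix (Fin 2) (Fin 2) ℂ, B ∈ Matrix.unitaryGroup (Fin 2) ℂ →
      B.det = 1 → Q ∈ Matrix.unitaryGroup (Fin 2) ℂ → Q.det = 1 → Q * star Q = 1 →
      ∃ b c : ℂ, B * Q = Q * !![b, c; -conj c, conj b] ∧ b * conj b + c * conj c = 1 := by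
    intro B Q hBm hBd hQm hQd hQr
    have hB'm : star Q * B * Q ∈ Matrix.unitaryGroup (Fin 2) ℂ :=
      mul_mem (mul_mem (Unitary.star_mem hQm) hBm) hQm
    have hB'd : (star Q * B * Q).det = 1 := by
      simp [Matrix.det_mul, hBd, hQd, Matrix.star_eq_conjTranspose, Matrix.det_conjTranspose]
    obtain ⟨hb11, hb10, hnrm⟩ := su2_entries _ hB'm hB'd
    refine ⟨(star Q * B * Q) 0 0, (star Q * B * Q) 0 1, ?_, hnrm⟩
    have hB'eq : star Q * B * Q = !![(star Q * B * Q) 0 0, (star Q * B * Q) 0 1;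
        -conj ((star Q * B * Q) 0 1), conj ((star Q * B * Q) 0 0)] := by
      ext i j
      fin_cases i <;> fin_cases j <;> simp [hb11, hb10]
    rw [← hB'eq]
    calc B * Q = (Q * star Q) * B * Q := by rw [hQr, one_mul]
    _ = Q * (star Q * B * Q) := by simp only [mul_assoc]
  obtain ⟨b₁, c₁, hBQ₁, hnrm₁⟩ := getB B₁ Q₁ hB₁ hdB₁ hQ₁m hQ₁d hQ₁r
  obtain ⟨b₂, c₂, hBQ₂, hnrm₂⟩ := getB B₂ Q₂ hB₂ hdB₂ hQ₂m hQ₂d hQ₂r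
  -- traces
  have htA1 : A₁.trace = a₁ + conj a₁ := by
    rw [trace_conj _ _ _ hQ₁l hQ₁r hAQ₁, Matrix.trace_fin_two]; simp
  have htA2 : A₂.trace = a₂ + conj a₂ := by
    rw [trace_conj _ _ _ hQ₂l hQ₂r hAQ₂, Matrix.trace_fin_two]; simp
  have htB1 : B₁.trace = b₁ + conj b₁ := by
    rw [trace_conj _ _ _ hQ₁l hQ₁r hBQ₁, Matrix.trace_fin_two]; simp
  have htB2 : B₂.trace = b₂ + conj b₂ := by
    rw [trace_conj _ _ _ hQ₂l hQ₂r hBQ₂, Matrix.trace_fin_two]; simp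
  have hABQ₁ : (A₁ * B₁) * Q₁ = Q₁ * (!![a₁, 0; 0, conj a₁] *
      !![b₁, c₁; -conj c₁, conj b₁]) := by
    rw [mul_assoc, hBQ₁, ← mul_assoc, hAQ₁, mul_assoc]
  have hABQ₂ : (A₂ * B₂) * Q₂ = Q₂ * (!![a₂, 0; 0, conj a₂] *
      !![b₂, c₂; -conj c₂, conj b₂]) := by
    rw [mul_assoc, hBQ₂, ← mul_assoc, hAQ₂, mul_assoc]
  have htAB1 : (A₁ * B₁).trace = a₁ * b₁ + conj a₁ * conj b₁ := by
    rw [trace_conj _ _ _ hQ₁l hQ₁r hABQ₁, Matrix.trace_fin_two]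
    simp [Matrix.mul_apply, Fin.sum_univ_two]
  have htAB2 : (A₂ * B₂).trace = a₂ * b₂ + conj a₂ * conj b₂ := by
    rw [trace_conj _ _ _ hQ₂l hQ₂r hABQ₂, Matrix.trace_fin_two]
    simp [Matrix.mul_apply, Fin.sum_univ_two]
  -- D acting on e₀
  have hDe : ∀ a : ℂ, (!![a, 0; 0, conj a] : Matrix (Fin 2) (Fin 2) ℂ).mulVec ![1, 0]
      = a • ![1, 0] := by
    intro a
    funext i
    fin_cases i <;> simp [Matrix.mulVec, dotProduct, Fin.sum_univ_two]
  have hQe : Q₁.mulVec ![1, 0] ≠ 0 := by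
    intro h0
    have hQu : IsUnit Q₁.det := by rw [hQ₁d]; exact isUnit_one
    have h1 : (Q₁⁻¹ * Q₁).mulVec ![1, 0] = (0 : Fin 2 → ℂ) := by
      rw [← Matrix.mulVec_mulVec, h0, Matrix.mulVec_zero]
    rw [Matrix.nonsing_inv_mul _ hQu, Matrix.one_mulVec] at h1
    have := congrFun h1 0
    simp at this
  -- strict positivity of a₁.im
  have him₁' : 0 < a₁.im := by
    rcases him₁.lt_or_eq with h | h
    · exact h
    · exfalso
      have hca : conj a₁ = a₁ := Complex.conj_eq_iff_im.mpr h.symm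
      obtain ⟨v, ν, hv0, hBv⟩ := eigvec B₁ hB₁ hdB₁
      apply hirr
      refine ⟨v, a₁, ν, hv0, ?_, hBv⟩
      have hA₁e : A₁ = Q₁ * !![a₁, 0; 0, conj a₁] * star Q₁ := eq_form _ _ _ hQ₁r hAQ₁
      have hD : (!![a₁, 0; 0, conj a₁] : Matrix (Fin 2) (Fin 2) ℂ)
          = a₁ • (1 : Matrix (Fin 2) (Fin 2) ℂ) := by
        ext i j
        fin_cases i <;> fin_cases j <;> simp [hca, Matrix.one_apply]
      have hA₁s : A₁ = a₁ • (1 : Matrix (Fin 2) (Fin 2) ℂ) := by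
        rw [hA₁e, hD, Matrix.mul_smul, Matrix.smul_mul, mul_one, hQ₁r]
      rw [hA₁s, Matrix.smul_mulVec, Matrix.one_mulVec]
  -- c₁ ≠ 0 by irreducibility
  have hc₁0 : c₁ ≠ 0 := by
    intro h0
    apply hirr
    refine ⟨Q₁.mulVec ![1, 0], a₁, b₁, hQe, ?_, ?_⟩
    · rw [Matrix.mulVec_mulVec, hAQ₁, ← Matrix.mulVec_mulVec, hDe, Matrix.mulVec_smul]
    · have hBe : (!![b₁, c₁; -conj c₁, conj b₁] : Matrix (Fin 2) (Fin 2) ℂ).mulVec ![1, 0]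
          = b₁ • ![1, 0] := by
        funext i
        fin_cases i <;> simp [Matrix.mulVec, dotProduct, Fin.sum_univ_two, h0]
      rw [Matrix.mulVec_mulVec, hBQ₁, ← Matrix.mulVec_mulVec, hBe, Matrix.mulVec_smul]
  -- identify the normal forms
  have ha21 : a₂ = a₁ :=
    (unit_pt_eq a₁ a₂ haa₁ haa₂ him₁ him₂ (by rw [← htA1, ← htA2, htA])).symm
  subst a₂
  have hb21 : b₂ = b₁ :=
    (second_eq a₁ b₁ b₂ (ne_of_gt him₁') (by rw [← htB1, ← htB2, htB])
      (by rw [← htAB1, ← htAB2, htAB])).symm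
  subst b₂
  have hcc : c₁ * conj c₁ = c₂ * conj c₂ := by linear_combination hnrm₁ - hnrm₂
  have hc₂0 : c₂ ≠ 0 := by
    intro h0
    rw [h0] at hcc
    simp only [map_zero, mul_zero] at hcc
    rcases mul_eq_zero.mp hcc with h | h
    · exact hc₁0 h
    · exact hc₁0 (by simpa using congrArg conj h)
  have habs12 : ‖c₁‖ = ‖c₂‖ := by
    have h1 : ((Complex.normSq c₁ : ℝ) : ℂ) = ((Complex.normSq c₂ : ℝ) : ℂ) := by
      rw [← Complex.mul_conj, ← Complex.mul_conj]; exact hcc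
    have h2 : Complex.normSq c₁ = Complex.normSq c₂ := by exact_mod_cast h1
    rw [Complex.norm_def, Complex.norm_def, h2]
  obtain ⟨Qf₁, hQf₁m, hQf₁d, hAf₁, hBf₁⟩ :=
    rot_phase A₁ B₁ Q₁ a₁ b₁ c₁ hQ₁m hQ₁d hAQ₁ hBQ₁ hc₁0
  obtain ⟨Qf₂, hQf₂m, hQf₂d, hAf₂, hBf₂⟩ :=
    rot_phase A₂ B₂ Q₂ a₁ b₁ c₂ hQ₂m hQ₂d hAQ₂ hBQ₂ hc₂0
  rw [← habs12] at hBf₂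
  -- assemble the conjugator
  have hQf₁l : star Qf₁ * Qf₁ = 1 := mem_unitaryGroup_iff'.mp hQf₁m
  have hQf₁r : Qf₁ * star Qf₁ = 1 := mem_unitaryGroup_iff.mp hQf₁m
  have hQf₂r : Qf₂ * star Qf₂ = 1 := mem_unitaryGroup_iff.mp hQf₂m
  have hPm : Qf₂ * star Qf₁ ∈ Matrix.unitaryGroup (Fin 2) ℂ :=
    mul_mem hQf₂m (Unitary.star_mem hQf₁m)
  have hPd : (Qf₂ * star Qf₁).det = 1 := by
    rw [Matrix.det_mul, hQf₂d, Matrix.star_eq_conjTranspose, Matrix.det_conjTranspose, hQf₁d]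
    simp
  have hPinv : (Qf₂ * star Qf₁)⁻¹ = star (Qf₂ * star Qf₁) :=
    Matrix.inv_eq_left_inv (mem_unitaryGroup_iff'.mp hPm)
  have hstarP : star (Qf₂ * star Qf₁) = Qf₁ * star Qf₂ := by rw [StarMul.star_mul, star_star]
  refine ⟨Qf₂ * star Qf₁, hPm, hPd, ?_, ?_⟩
  · rw [hPinv, hstarP]
    exact assemble A₁ A₂ _ Qf₁ Qf₂ hQf₁l hQf₁r hQf₂r hAf₁ hAf₂
  · rw [hPinv, hstarP]
    exact assemble B₁ B₂ _ Qf₁ Qf₂ hQf₁l hQf₁r hQf₂r hBf₁ hBf₂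
end
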